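/- Let T > 0 and β, γ ≥ 0 with β + γ > 0. Let μ_{β,γ} : [0, T] → [0, ∞) be the unique continuous, strictly increasing function with μ_{β,γ}(0) = 0 that is differentiable on (0, T] and satisfies μ_{β,γ}′(s) = γ²/(2·μ_{β,γ}(s)) + (√2/2)·β for s ∈ (0, T], and set ν_{β,γ}(s) := ∫₀ˢ [ (√2/2)·β·μ_{β,γ}(r) + (γ²/2)·(1 + √2/μ_{β,γ}(r)) ] dr (a finite integral for every s ∈ [0, T]). Define φ(s, x) := (x+e)·exp( μ_{β,γ}(s)·√(2·ln(x+e)) + ν_{β,γ}(s) ) for (s, x) ∈ [0, T] × [0, ∞). Then φ is continuous on [0, T] × [0, ∞), the partial derivatives ∂ₛφ, ∂ₓφ, ∂ₓₓφ exist and are continuous on (0, T] × [0, ∞), and for every s ∈ (0, T], every x ≥ 0, and every z ∈ ℝ^d (d ≥ 1): −∂ₓφ(s, x)·( β·x·√(ln x)·𝟙_{x>1} + γ·|z| ) + (1/2)·∂ₓₓφ(s, x)·|z|² + ∂ₛφ(s, x) ≥ 0. -/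

import Mathlib

open MeasureTheory

open Set intervalIntegral


noncomputable def gg (x : ℝ) : ℝ := Real.sqrt (2 * Real.log (x + Real.exp 1))

lemma log_ge_one {x : ℝ} (hx : 0 ≤ x) : 1 ≤ Real.log (x + Real.exp 1) := by
  have h1 : Real.exp 1 ≤ x + Real.exp 1 := by linarith
  calc (1:ℝ) = Real.log (Real.exp 1) := (Real.log_exp 1).symm
  _ ≤ _ := Real.log_le_log (Real.exp_pos 1) h1

lemma gg_sq {x : ℝ} (hx : 0 ≤ x) : gg x ^ 2 = 2 * Real.log (x + Real.exp 1) := by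
  have := log_ge_one hx
  rw [gg, Real.sq_sqrt (by linarith)]

lemma gg_ge {x : ℝ} (hx : 0 ≤ x) : Real.sqrt 2 ≤ gg x := by
  have := log_ge_one hx
  exact Real.sqrt_le_sqrt (by linarith)

lemma gg_pos {x : ℝ} (hx : 0 ≤ x) : 0 < gg x :=
  lt_of_lt_of_le (Real.sqrt_pos.2 (by norm_num)) (gg_ge hx)

lemma xe_pos {x : ℝ} (hx : 0 ≤ x) : 0 < x + Real.exp 1 := by
  have := Real.exp_pos 1; linarith

lemma hasDerivAt_gg {x : ℝ} (hx : 0 ≤ x) :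
    HasDerivAt gg (((x + Real.exp 1) * gg x)⁻¹) x := by
  have hxe := xe_pos hx
  have hlog : HasDerivAt (fun t : ℝ => 2 * Real.log (t + Real.exp 1))
      (2 * (x + Real.exp 1)⁻¹) x := by
    have h := ((hasDerivAt_id x).add_const (Real.exp 1)).log hxe.ne'
    simpa using h.const_mul 2
  have hne : 2 * Real.log (x + Real.exp 1) ≠ 0 := by
    have := log_ge_one hx; positivity
  have h := hlog.sqrt hne
  refine h.congr_deriv (Eq.symm ?_)
  rw [show Real.sqrt (2 * Real.log (x + Real.exp 1)) = gg x from rfl]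
  have hg := gg_pos hx
  field_simp
lemma hasDerivAt_phi_x (a b : ℝ) {x : ℝ} (hx : 0 ≤ x) :
    HasDerivAt (fun u => (u + Real.exp 1) * Real.exp (a * gg u + b))
      (Real.exp (a * gg x + b) * (1 + a / gg x)) x := by
  have hxe := xe_pos hx
  have hg := gg_pos hx
  have hA : HasDerivAt (fun u => Real.exp (a * gg u + b))
      (Real.exp (a * gg x + b) * (a * ((x + Real.exp 1) * gg x)⁻¹)) x :=
    (((hasDerivAt_gg hx).const_mul a).add_const b).exp
  have h := ((hasDerivAt_id x).add_const (Real.exp 1)).mul hA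
  refine h.congr_deriv (Eq.symm ?_)
  simp only [id]
  field_simp

lemma hasDerivAt_phix_x (a b : ℝ) {x : ℝ} (hx : 0 ≤ x) :
    HasDerivAt (fun u => Real.exp (a * gg u + b) * (1 + a / gg u))
      (Real.exp (a * gg x + b) * (a / ((x + Real.exp 1) * gg x)) *
        (1 + a / gg x - 1 / gg x ^ 2)) x := by
  have hxe := xe_pos hx
  have hg := gg_pos hx
  have hA : HasDerivAt (fun u => Real.exp (a * gg u + b))
      (Real.exp (a * gg x + b) * (a * ((x + Real.exp 1) * gg x)⁻¹)) x :=
    (((hasDerivAt_gg hx).const_mul a).add_const b).exp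
  have hq : HasDerivAt (fun u => 1 + a / gg u)
      (-(a * ((x + Real.exp 1) * gg x)⁻¹) / gg x ^ 2) x := by
    have h := ((hasDerivAt_const x a).div (hasDerivAt_gg hx) hg.ne').const_add 1
    refine h.congr_deriv (Eq.symm ?_)
    field_simp
    ring
  have h := hA.mul hq
  refine h.congr_deriv (Eq.symm ?_)
  field_simp
  ring
lemma amgm (c P γ r : ℝ) (hc : 0 < c) : γ * P * r ≤ c / 2 * r ^ 2 + γ ^ 2 * P ^ 2 / (2 * c) := by
  have h2c : (0:ℝ) < 2 * c := by positivity
  rw [← mul_le_mul_iff_right₀ h2c]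
  have hrhs : 2 * c * (c / 2 * r ^ 2 + γ ^ 2 * P ^ 2 / (2 * c)) = c ^ 2 * r ^ 2 + γ ^ 2 * P ^ 2 := by
    field_simp
  rw [hrhs]
  nlinarith [sq_nonneg (c * r - γ * P)]

lemma key_ineq (β γ a g E r X : ℝ) (hβ : 0 ≤ β) (hγ : 0 ≤ γ) (ha : 0 < a)
    (hg : Real.sqrt 2 ≤ g) (hE : 0 < E) (hr : 0 ≤ r)
    (hX0 : 0 ≤ X) (hXle : X ≤ β * E * g / Real.sqrt 2) :
    0 ≤ -(1 + a / g) * (X + γ * r)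
        + 1 / 2 * ((a / (E * g)) * (1 + a / g - 1 / g ^ 2)) * r ^ 2
        + E * ((γ ^ 2 / (2 * a) + Real.sqrt 2 / 2 * β) * g
            + (Real.sqrt 2 / 2 * β * a + γ ^ 2 / 2 * (1 + Real.sqrt 2 / a))) := by
  have hs2 : Real.sqrt 2 ^ 2 = 2 := Real.sq_sqrt (by norm_num)
  have hs2pos : 0 < Real.sqrt 2 := Real.sqrt_pos.2 (by norm_num)
  have hg0 : 0 < g := lt_of_lt_of_le hs2pos hg
  have hg2 : 2 ≤ g ^ 2 := by nlinarith
  set s2 := Real.sqrt 2 with hs2def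
  obtain ⟨P, hPdef⟩ : ∃ P, P = 1 + a / g := ⟨_, rfl⟩
  obtain ⟨Q, hQdef⟩ : ∃ Q, Q = 1 + a / g - 1 / g ^ 2 := ⟨_, rfl⟩
  obtain ⟨c, hcdef⟩ : ∃ c, c = a * Q / (E * g) := ⟨_, rfl⟩
  rw [← hQdef, ← hPdef]
  have hPg : P * g = g + a := by rw [hPdef]; field_simp
  have hQg : Q * g ^ 2 = g ^ 2 + a * g - 1 := by rw [hQdef]; field_simp
  have hP0 : 0 ≤ P := by rw [hPdef]; positivity
  have hQpos : 0 < Q := by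
    have h1 : 1 / g ^ 2 ≤ 1 / 2 :=
      div_le_div_of_nonneg_left (by norm_num) (by norm_num) hg2
    have h2 : 0 ≤ a / g := by positivity
    rw [hQdef]; linarith
  have hcE : c * (E * g) = a * Q := by rw [hcdef]; field_simp
  have hc : 0 < c := by rw [hcdef]; positivity
  -- Step 1: bound the X term
  have h1 : P * X ≤ E * (s2 / 2 * β * g + s2 / 2 * β * a) := by
    have hb : P * X ≤ P * (β * E * g / s2) := mul_le_mul_of_nonneg_left hXle hP0
    have hinv : s2 / 2 = 1 / s2 := by
      rw [div_eq_div_iff (by norm_num) hs2pos.ne']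
      nlinarith [hs2]
    have heq : P * (β * E * g / s2) = E * (s2 / 2 * β * g + s2 / 2 * β * a) := by
      calc P * (β * E * g / s2) = (P * g) * (β * E) * (1 / s2) := by ring
      _ = (g + a) * (β * E) * (s2 / 2) := by rw [hPg, ← hinv]
      _ = E * (s2 / 2 * β * g + s2 / 2 * β * a) := by ring
    linarith [heq ▸ hb]
  -- Step 2: polynomial core inequality
  have h3 : (g + a) ^ 2 * g ≤ (g ^ 2 + a * g - 1) * (g + a + s2) := by
    nlinarith [mul_nonneg (sub_nonneg.2 hg) hg0.le, mul_pos ha hg0,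
      mul_nonneg (sub_nonneg.2 hg) ha.le,
      mul_nonneg (mul_nonneg (sub_nonneg.2 hg) ha.le) hg0.le]
  have h5 : P ^ 2 * g ≤ (g + a + s2) * Q := by
    have h5' : P ^ 2 * g * g ^ 2 ≤ (g + a + s2) * Q * g ^ 2 := by
      calc P ^ 2 * g * g ^ 2 = (P * g) ^ 2 * g := by ring
      _ = (g + a) ^ 2 * g := by rw [hPg]
      _ ≤ (g ^ 2 + a * g - 1) * (g + a + s2) := h3
      _ = (g + a + s2) * (Q * g ^ 2) := by rw [hQg]; ring
      _ = (g + a + s2) * Q * g ^ 2 := by ring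
    exact le_of_mul_le_mul_right h5' (by positivity)
  have h6 : a * P ^ 2 ≤ (g + a + s2) * (c * E) := by
    have h6' : a * P ^ 2 * g ≤ (g + a + s2) * (c * E) * g := by
      calc a * P ^ 2 * g = a * (P ^ 2 * g) := by ring
      _ ≤ a * ((g + a + s2) * Q) := mul_le_mul_of_nonneg_left h5 ha.le
      _ = (g + a + s2) * (c * (E * g)) := by rw [hcE]; ring
      _ = (g + a + s2) * (c * E) * g := by ring
    exact le_of_mul_le_mul_right h6' hg0
  -- Step 3: AM-GM for the z term
  have hAM : γ * P * r ≤ c / 2 * r ^ 2 + γ ^ 2 * P ^ 2 / (2 * c) := amgm c P γ r hc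
  -- Step 4
  have h4 : γ ^ 2 * P ^ 2 / (2 * c) ≤ E * (γ ^ 2 / (2 * a) * g + γ ^ 2 / 2 * (1 + s2 / a)) := by
    rw [div_le_iff₀ (by positivity : (0:ℝ) < 2 * c)]
    have hsmall : (γ ^ 2 / (2 * a) * g + γ ^ 2 / 2 * (1 + s2 / a)) * a = γ ^ 2 / 2 * (g + a + s2) := by
      field_simp
      ring
    have hM : E * (γ ^ 2 / (2 * a) * g + γ ^ 2 / 2 * (1 + s2 / a)) * (2 * c) * a
        = γ ^ 2 * ((g + a + s2) * (c * E)) := by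
      calc E * (γ ^ 2 / (2 * a) * g + γ ^ 2 / 2 * (1 + s2 / a)) * (2 * c) * a
          = E * ((γ ^ 2 / (2 * a) * g + γ ^ 2 / 2 * (1 + s2 / a)) * a) * (2 * c) := by ring
      _ = E * (γ ^ 2 / 2 * (g + a + s2)) * (2 * c) := by rw [hsmall]
      _ = γ ^ 2 * ((g + a + s2) * (c * E)) := by ring
    have h7 : γ ^ 2 * P ^ 2 * a ≤ γ ^ 2 * ((g + a + s2) * (c * E)) := by
      calc γ ^ 2 * P ^ 2 * a = γ ^ 2 * (a * P ^ 2) := by ring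
      _ ≤ γ ^ 2 * ((g + a + s2) * (c * E)) := mul_le_mul_of_nonneg_left h6 (by positivity)
    rw [← hM] at h7
    have := le_of_mul_le_mul_right (by linarith : γ ^ 2 * P ^ 2 * a ≤ E * (γ ^ 2 / (2 * a) * g + γ ^ 2 / 2 * (1 + s2 / a)) * (2 * c) * a) ha
    linarith
  -- Combine
  have hexp : -P * (X + γ * r) + 1 / 2 * ((a / (E * g)) * Q) * r ^ 2
        + E * ((γ ^ 2 / (2 * a) + s2 / 2 * β) * g + (s2 / 2 * β * a + γ ^ 2 / 2 * (1 + s2 / a)))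
      = (E * (s2 / 2 * β * g + s2 / 2 * β * a) - P * X)
        + (c / 2 * r ^ 2 + γ ^ 2 * P ^ 2 / (2 * c) - γ * P * r)
        + (E * (γ ^ 2 / (2 * a) * g + γ ^ 2 / 2 * (1 + s2 / a)) - γ ^ 2 * P ^ 2 / (2 * c)) := by
    rw [hcdef]; ring
  rw [hexp]
  have t1 : 0 ≤ E * (s2 / 2 * β * g + s2 / 2 * β * a) - P * X := by linarith
  have t2 : 0 ≤ c / 2 * r ^ 2 + γ ^ 2 * P ^ 2 / (2 * c) - γ * P * r := by linarith
  have t3 : 0 ≤ E * (γ ^ 2 / (2 * a) * g + γ ^ 2 / 2 * (1 + s2 / a)) - γ ^ 2 * P ^ 2 / (2 * c) := by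
    linarith
  linarith
section MuBounds
variable {T β γ : ℝ} {μ : ℝ → ℝ}

lemma mu_nonneg (hT : 0 < T) (hμmono : StrictMonoOn μ (Set.Icc 0 T)) (hμ0 : μ 0 = 0) :
    ∀ r ∈ Set.Icc 0 T, 0 ≤ μ r := by
  intro r hr
  rcases eq_or_lt_of_le hr.1 with h | h
  · rw [← h, hμ0]
  · have := hμmono (Set.left_mem_Icc.2 hT.le) hr h
    rw [hμ0] at this; exact this.le

lemma mu_lower (hT : 0 < T) (hβ : 0 ≤ β) (hγ : 0 ≤ γ)
    (hμc : ContinuousOn μ (Set.Icc 0 T)) (hμmono : StrictMonoOn μ (Set.Icc 0 T))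
    (hμ0 : μ 0 = 0) (hμpos : ∀ s ∈ Set.Ioc 0 T, 0 < μ s)
    (hμderiv : ∀ s ∈ Set.Ioc 0 T,
      HasDerivWithinAt μ (γ ^ 2 / (2 * μ s) + Real.sqrt 2 / 2 * β) (Set.Icc 0 T) s) :
    ∀ r ∈ Set.Icc 0 T, γ * Real.sqrt r ≤ μ r := by
  have hmono : MonotoneOn (fun r => μ r ^ 2 - γ ^ 2 * r) (Set.Icc 0 T) := by
    apply monotoneOn_of_deriv_nonneg (convex_Icc 0 T)
    · exact (hμc.pow 2).sub (continuousOn_const.mul continuousOn_id)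
    · intro r hr
      rw [interior_Icc] at hr
      have hd : HasDerivAt μ (γ ^ 2 / (2 * μ r) + Real.sqrt 2 / 2 * β) r :=
        (hμderiv r ⟨hr.1, hr.2.le⟩).hasDerivAt (Icc_mem_nhds hr.1 hr.2)
      exact ((hd.pow 2).sub ((hasDerivAt_id r).const_mul (γ ^ 2))).differentiableAt.differentiableWithinAt
    · intro r hr
      rw [interior_Icc] at hr
      have hμr := hμpos r ⟨hr.1, hr.2.le⟩
      have hd : HasDerivAt μ (γ ^ 2 / (2 * μ r) + Real.sqrt 2 / 2 * β) r :=
        (hμderiv r ⟨hr.1, hr.2.le⟩).hasDerivAt (Icc_mem_nhds hr.1 hr.2)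
      have hd2 : HasDerivAt (fun r => μ r ^ 2 - γ ^ 2 * r)
          (2 * μ r ^ 1 * (γ ^ 2 / (2 * μ r) + Real.sqrt 2 / 2 * β) - γ ^ 2 * 1) r := by
        exact ((hd.pow 2).sub ((hasDerivAt_id r).const_mul (γ ^ 2))).congr_deriv (by norm_num)
      rw [hd2.deriv]
      have : 2 * μ r ^ 1 * (γ ^ 2 / (2 * μ r) + Real.sqrt 2 / 2 * β) - γ ^ 2 * 1
          = Real.sqrt 2 * β * μ r := by
        field_simp; ring
      rw [this]
      have h2 : (0:ℝ) ≤ Real.sqrt 2 := Real.sqrt_nonneg 2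
      positivity
  intro r hr
  have h0 : (0:ℝ) ∈ Set.Icc 0 T := Set.left_mem_Icc.2 hT.le
  have := hmono h0 hr hr.1
  simp only [hμ0] at this
  have h1 : γ ^ 2 * r ≤ μ r ^ 2 := by nlinarith
  have h2 : Real.sqrt (γ ^ 2 * r) ≤ Real.sqrt (μ r ^ 2) := Real.sqrt_le_sqrt h1
  rwa [Real.sqrt_mul (sq_nonneg γ), Real.sqrt_sq hγ,
    Real.sqrt_sq (mu_nonneg hT hμmono hμ0 r hr)] at h2

lemma f_integrableOn (hT : 0 < T) (hβ : 0 ≤ β) (hγ : 0 ≤ γ)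
    (hμc : ContinuousOn μ (Set.Icc 0 T)) (hμmono : StrictMonoOn μ (Set.Icc 0 T))
    (hμ0 : μ 0 = 0) (hμpos : ∀ s ∈ Set.Ioc 0 T, 0 < μ s)
    (hlow : ∀ r ∈ Set.Icc 0 T, γ * Real.sqrt r ≤ μ r) :
    IntegrableOn (fun r => Real.sqrt 2 / 2 * β * μ r + γ ^ 2 / 2 * (1 + Real.sqrt 2 / μ r))
      (Set.Icc 0 T) := by
  rcases eq_or_lt_of_le hγ with hγ0 | hγpos
  · have heq : (fun r => Real.sqrt 2 / 2 * β * μ r + γ ^ 2 / 2 * (1 + Real.sqrt 2 / μ r))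
        = fun r => Real.sqrt 2 / 2 * β * μ r := by
      funext r; rw [← hγ0]; ring
    rw [heq]
    exact (continuousOn_const.mul hμc).integrableOn_Icc
  · rw [integrableOn_Icc_iff_integrableOn_Ioc]
    have hmeas : AEStronglyMeasurable
        (fun r => Real.sqrt 2 / 2 * β * μ r + γ ^ 2 / 2 * (1 + Real.sqrt 2 / μ r))
        (volume.restrict (Set.Ioc 0 T)) := by
      have hμm : AEMeasurable μ (volume.restrict (Set.Ioc 0 T)) :=
        (hμc.mono Set.Ioc_subset_Icc_self).aemeasurable measurableSet_Ioc
      exact ((aemeasurable_const.mul hμm).add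
        (aemeasurable_const.mul (aemeasurable_const.add
          (aemeasurable_const.div hμm)))).aestronglyMeasurable
    -- dominating function
    have hbound : IntegrableOn
        (fun r => Real.sqrt 2 / 2 * β * μ T + γ ^ 2 / 2 + γ * Real.sqrt 2 / 2 * (1 / Real.sqrt r))
        (Set.Ioc 0 T) := by
      apply Integrable.add
      · exact integrableOn_const measure_Ioc_lt_top.ne
      · apply Integrable.const_mul
        have hrpow : IntegrableOn (fun r : ℝ => r ^ (-(1/2) : ℝ)) (Set.Ioc 0 T) := by
          have := (intervalIntegral.intervalIntegrable_rpow' (a := 0) (b := T) (r := -(1/2)) (by norm_num))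
          rwa [intervalIntegrable_iff_integrableOn_Ioc_of_le hT.le] at this
        apply hrpow.congr_fun _ measurableSet_Ioc
        intro r hr
        show r ^ (-(1/2) : ℝ) = 1 / Real.sqrt r
        rw [Real.rpow_neg hr.1.le]
        rw [show ((1:ℝ)/2) = (1/(2:ℝ)) from rfl, ← Real.sqrt_eq_rpow, one_div]
    apply hbound.mono' hmeas
    rw [ae_restrict_iff' measurableSet_Ioc]
    filter_upwards with r hr
    have hrIcc : r ∈ Set.Icc 0 T := ⟨hr.1.le, hr.2⟩
    have hsr : 0 < Real.sqrt r := Real.sqrt_pos.2 hr.1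
    have hμr : 0 < μ r := hμpos r hr
    have hμrT : μ r ≤ μ T := by
      rcases eq_or_lt_of_le hr.2 with h | h
      · rw [h]
      · exact (hμmono hrIcc (Set.right_mem_Icc.2 hT.le) h).le
    have hlow' : γ * Real.sqrt r ≤ μ r := hlow r hrIcc
    have hs2 : (0:ℝ) < Real.sqrt 2 := Real.sqrt_pos.2 (by norm_num)
    have ht1 : Real.sqrt 2 / 2 * β * μ r ≤ Real.sqrt 2 / 2 * β * μ T :=
      mul_le_mul_of_nonneg_left hμrT (by positivity)
    have ht2 : Real.sqrt 2 / μ r ≤ Real.sqrt 2 / (γ * Real.sqrt r) :=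
      div_le_div_of_nonneg_left hs2.le (by positivity) hlow'
    have hnn : 0 ≤ Real.sqrt 2 / 2 * β * μ r + γ ^ 2 / 2 * (1 + Real.sqrt 2 / μ r) := by
      positivity
    rw [Real.norm_eq_abs, abs_of_nonneg hnn]
    have ht3 : γ ^ 2 / 2 * (Real.sqrt 2 / (γ * Real.sqrt r)) = γ * Real.sqrt 2 / 2 * (1 / Real.sqrt r) := by
      field_simp
    have ht4 : γ ^ 2 / 2 * (Real.sqrt 2 / μ r) ≤ γ * Real.sqrt 2 / 2 * (1 / Real.sqrt r) := by
      rw [← ht3]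
      exact mul_le_mul_of_nonneg_left ht2 (by positivity)
    nlinarith [ht1, ht4]
end MuBounds
section Nu
variable {T β γ : ℝ} {μ ν : ℝ → ℝ}

lemma f_contOn (hμc : ContinuousOn μ (Set.Icc 0 T)) (hμpos : ∀ s ∈ Set.Ioc 0 T, 0 < μ s) :
    ContinuousOn (fun r => Real.sqrt 2 / 2 * β * μ r + γ ^ 2 / 2 * (1 + Real.sqrt 2 / μ r))
      (Set.Ioc 0 T) := by
  have hμc' : ContinuousOn μ (Set.Ioc 0 T) := hμc.mono Set.Ioc_subset_Icc_self
  exact (continuousOn_const.mul hμc').add (continuousOn_const.mul (continuousOn_const.add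
    (continuousOn_const.div hμc' (fun r hr => (hμpos r hr).ne'))))

lemma nu_cont (hT : 0 < T)
    (hint : IntegrableOn (fun r => Real.sqrt 2 / 2 * β * μ r
      + γ ^ 2 / 2 * (1 + Real.sqrt 2 / μ r)) (Set.Icc 0 T))
    (hν : ∀ s ∈ Set.Icc 0 T, ν s = ∫ r in (0 : ℝ)..s,
        (Real.sqrt 2 / 2 * β * μ r + γ ^ 2 / 2 * (1 + Real.sqrt 2 / μ r))) :
    ContinuousOn ν (Set.Icc 0 T) := by
  have h := intervalIntegral.continuousOn_primitive_interval
    (a := 0) (b := T) (μ := volume) (by rwa [Set.uIcc_of_le hT.le])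
  rw [Set.uIcc_of_le hT.le] at h
  exact h.congr hν

lemma nu_deriv (hT : 0 < T)
    (hμc : ContinuousOn μ (Set.Icc 0 T)) (hμpos : ∀ s ∈ Set.Ioc 0 T, 0 < μ s)
    (hint : IntegrableOn (fun r => Real.sqrt 2 / 2 * β * μ r
      + γ ^ 2 / 2 * (1 + Real.sqrt 2 / μ r)) (Set.Icc 0 T))
    (hν : ∀ s ∈ Set.Icc 0 T, ν s = ∫ r in (0 : ℝ)..s,
        (Real.sqrt 2 / 2 * β * μ r + γ ^ 2 / 2 * (1 + Real.sqrt 2 / μ r)))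
    {s : ℝ} (hs : s ∈ Set.Ioc 0 T) :
    HasDerivWithinAt ν
      (Real.sqrt 2 / 2 * β * μ s + γ ^ 2 / 2 * (1 + Real.sqrt 2 / μ s)) (Set.Ioc 0 T) s := by
  set f : ℝ → ℝ := fun r => Real.sqrt 2 / 2 * β * μ r + γ ^ 2 / 2 * (1 + Real.sqrt 2 / μ r)
    with hfdef
  have hfc : ContinuousOn f (Set.Ioc 0 T) := f_contOn hμc hμpos
  have hII : IntervalIntegrable f volume 0 s := by
    apply MeasureTheory.IntegrableOn.intervalIntegrable
    apply hint.mono_set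
    rw [Set.uIcc_of_le hs.1.le]
    exact Set.Icc_subset_Icc le_rfl hs.2
  have hmeasIoc : AEStronglyMeasurable f (volume.restrict (Set.Ioc 0 T)) :=
    hfc.aestronglyMeasurable measurableSet_Ioc
  have hF : HasDerivWithinAt (fun u => ∫ x in (0:ℝ)..u, f x) (f s) (Set.Ioc 0 T) s := by
    rcases eq_or_lt_of_le hs.2 with hsT | hsT
    · subst hsT
      have hmeas : StronglyMeasurableAtFilter f (nhdsWithin s (Set.Iic s)) :=
        ⟨Set.Ioc 0 s, by
          apply mem_nhdsWithin.2
          exact ⟨Set.Ioi 0, isOpen_Ioi, hs.1, by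
            intro x hx; exact ⟨hx.1, hx.2⟩⟩, hmeasIoc⟩
      have hcw : ContinuousWithinAt f (Set.Iic s) s := by
        have h1 : ContinuousWithinAt f (Set.Ioc 0 s) s := hfc s hs
        have h2 : nhdsWithin s (Set.Iic s) = nhdsWithin s (Set.Ioc 0 s) := by
          rw [← nhdsWithin_Ioc_eq_nhdsLE hs.1]
        exact ContinuousWithinAt.mono_of_mem_nhdsWithin h1 (by
          rw [h2]; exact self_mem_nhdsWithin)
      have := intervalIntegral.integral_hasDerivWithinAt_right (s := Set.Iic s) (t := Set.Iic s)
        hII hmeas hcw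
      exact this.mono Set.Ioc_subset_Iic_self
    · have hmeas : StronglyMeasurableAtFilter f (nhds s) :=
        ⟨Set.Ioo 0 T, Ioo_mem_nhds hs.1 hsT,
          hmeasIoc.mono_measure (Measure.restrict_mono Set.Ioo_subset_Ioc_self le_rfl)⟩
      have hcont : ContinuousAt f s := hfc.continuousAt (Ioc_mem_nhds hs.1 hsT)
      exact (intervalIntegral.integral_hasDerivAt_right hII hmeas hcont).hasDerivWithinAt
  exact hF.congr (fun t ht => hν t ⟨ht.1.le, ht.2⟩) (hν s ⟨hs.1.le, hs.2⟩)
end Nu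

lemma gg_contOn : ContinuousOn gg (Set.Ici 0) :=
  fun x hx => ((hasDerivAt_gg hx).continuousAt).continuousWithinAt

/-- Proposition 3.2: with `μ = μ_{β,γ}` the solution of the singular ODE (3.8),
`ν = ν_{β,γ}` given by (3.9) and `φ(s,x) = (x+e)·exp(μ(s)·√(2·ln(x+e)) + ν(s))`,
the function `φ` is continuous on `[0,T]×[0,∞)`, is `C^{1,2}` on `(0,T]×[0,∞)`
(its partial derivatives `∂ₛφ, ∂ₓφ, ∂ₓₓφ` exist and are continuous there), and satisfies
`−∂ₓφ·(β·x·√(ln x)·𝟙_{x>1} + γ·|z|) + (1/2)·∂ₓₓφ·|z|² + ∂ₛφ ≥ 0` for all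
`s ∈ (0,T]`, `x ≥ 0`, `z ∈ ℝ^d`. -/
theorem stmt_9 (T β γ : ℝ) (d : ℕ) (hd : 1 ≤ d)
    (hT : 0 < T) (hβ : 0 ≤ β) (hγ : 0 ≤ γ) (hβγ : 0 < β + γ)
    (μ : ℝ → ℝ)
    (hμc : ContinuousOn μ (Set.Icc 0 T)) (hμmono : StrictMonoOn μ (Set.Icc 0 T))
    (hμ0 : μ 0 = 0) (hμpos : ∀ s ∈ Set.Ioc 0 T, 0 < μ s)
    (hμderiv : ∀ s ∈ Set.Ioc 0 T,
      HasDerivWithinAt μ (γ ^ 2 / (2 * μ s) + Real.sqrt 2 / 2 * β) (Set.Icc 0 T) s)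
    (ν : ℝ → ℝ)
    (hν : ∀ s ∈ Set.Icc 0 T,
      ν s = ∫ r in (0 : ℝ)..s,
        (Real.sqrt 2 / 2 * β * μ r + γ ^ 2 / 2 * (1 + Real.sqrt 2 / μ r)))
    (φ : ℝ → ℝ → ℝ)
    (hφ : ∀ s x, φ s x =
      (x + Real.exp 1) *
        Real.exp (μ s * Real.sqrt (2 * Real.log (x + Real.exp 1)) + ν s)) :
    ContinuousOn (fun p : ℝ × ℝ => φ p.1 p.2) (Set.Icc 0 T ×ˢ Set.Ici 0) ∧
    ∃ φs φx φxx : ℝ → ℝ → ℝ,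
      (∀ s ∈ Set.Ioc 0 T, ∀ x ∈ Set.Ici (0 : ℝ),
        HasDerivWithinAt (fun t => φ t x) (φs s x) (Set.Ioc 0 T) s ∧
        HasDerivWithinAt (fun u => φ s u) (φx s x) (Set.Ici 0) x ∧
        HasDerivWithinAt (fun u => φx s u) (φxx s x) (Set.Ici 0) x) ∧
      ContinuousOn (fun p : ℝ × ℝ => φs p.1 p.2) (Set.Ioc 0 T ×ˢ Set.Ici 0) ∧
      ContinuousOn (fun p : ℝ × ℝ => φx p.1 p.2) (Set.Ioc 0 T ×ˢ Set.Ici 0) ∧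
      ContinuousOn (fun p : ℝ × ℝ => φxx p.1 p.2) (Set.Ioc 0 T ×ˢ Set.Ici 0) ∧
      ∀ s ∈ Set.Ioc 0 T, ∀ x ∈ Set.Ici (0 : ℝ), ∀ z : EuclideanSpace ℝ (Fin d),
        0 ≤ -φx s x * ((if 1 < x then β * x * Real.sqrt (Real.log x) else 0) + γ * ‖z‖)
            + 1 / 2 * φxx s x * ‖z‖ ^ 2 + φs s x := by
  have hggdef : ∀ y : ℝ, Real.sqrt (2 * Real.log (y + Real.exp 1)) = gg y := fun _ => rfl
  have hlow := mu_lower hT hβ hγ hμc hμmono hμ0 hμpos hμderiv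
  have hint := f_integrableOn hT hβ hγ hμc hμmono hμ0 hμpos hlow
  have hνc : ContinuousOn ν (Set.Icc 0 T) := nu_cont hT hint hν
  have hμc' : ContinuousOn μ (Set.Ioc 0 T) := hμc.mono Set.Ioc_subset_Icc_self
  have hνc' : ContinuousOn ν (Set.Ioc 0 T) := hνc.mono Set.Ioc_subset_Icc_self
  constructor
  · -- continuity of φ
    have heq : (fun p : ℝ × ℝ => φ p.1 p.2)
        = fun p : ℝ × ℝ => (p.2 + Real.exp 1) * Real.exp (μ p.1 * gg p.2 + ν p.1) := by
      funext p; rw [hφ p.1 p.2, hggdef]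
    rw [heq]
    have hcμ : ContinuousOn (fun p : ℝ × ℝ => μ p.1) (Set.Icc 0 T ×ˢ Set.Ici 0) :=
      hμc.comp continuous_fst.continuousOn (fun p hp => hp.1)
    have hcν : ContinuousOn (fun p : ℝ × ℝ => ν p.1) (Set.Icc 0 T ×ˢ Set.Ici 0) :=
      hνc.comp continuous_fst.continuousOn (fun p hp => hp.1)
    have hcg : ContinuousOn (fun p : ℝ × ℝ => gg p.2) (Set.Icc 0 T ×ˢ Set.Ici 0) :=
      gg_contOn.comp continuous_snd.continuousOn (fun p hp => hp.2)
    exact ((continuous_snd.add continuous_const).continuousOn).mul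
      (Real.continuous_exp.comp_continuousOn ((hcμ.mul hcg).add hcν))
  refine ⟨fun s x => (x + Real.exp 1) * Real.exp (μ s * gg x + ν s) *
      ((γ ^ 2 / (2 * μ s) + Real.sqrt 2 / 2 * β) * gg x
        + (Real.sqrt 2 / 2 * β * μ s + γ ^ 2 / 2 * (1 + Real.sqrt 2 / μ s))),
    fun s x => Real.exp (μ s * gg x + ν s) * (1 + μ s / gg x),
    fun s x => Real.exp (μ s * gg x + ν s) * (μ s / ((x + Real.exp 1) * gg x)) *
      (1 + μ s / gg x - 1 / gg x ^ 2),
    ?_, ?_, ?_, ?_, ?_⟩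
  · -- derivatives
    intro s hs x hx
    refine ⟨?_, ?_, ?_⟩
    · simp only [hφ, hggdef]
      have hμ' := (hμderiv s hs).mono Set.Ioc_subset_Icc_self
      have hν' := nu_deriv hT hμc hμpos hint hν hs
      have h := (((hμ'.mul_const (gg x)).add hν').exp).const_mul (x + Real.exp 1)
      simp only [Pi.add_apply] at h
      refine h.congr_deriv (Eq.symm ?_)
      ring
    · simp only [hφ, hggdef]
      exact (hasDerivAt_phi_x (μ s) (ν s) hx).hasDerivWithinAt
    · exact (hasDerivAt_phix_x (μ s) (ν s) hx).hasDerivWithinAt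
  · -- continuity of φs
    have hcμ : ContinuousOn (fun p : ℝ × ℝ => μ p.1) (Set.Ioc 0 T ×ˢ Set.Ici 0) :=
      hμc'.comp continuous_fst.continuousOn (fun p hp => hp.1)
    have hcν : ContinuousOn (fun p : ℝ × ℝ => ν p.1) (Set.Ioc 0 T ×ˢ Set.Ici 0) :=
      hνc'.comp continuous_fst.continuousOn (fun p hp => hp.1)
    have hcg : ContinuousOn (fun p : ℝ × ℝ => gg p.2) (Set.Ioc 0 T ×ˢ Set.Ici 0) :=
      gg_contOn.comp continuous_snd.continuousOn (fun p hp => hp.2)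
    have hμne : ∀ p ∈ Set.Ioc 0 T ×ˢ Set.Ici (0:ℝ), μ p.1 ≠ 0 :=
      fun p hp => (hμpos p.1 hp.1).ne'
    have hcA : ContinuousOn (fun p : ℝ × ℝ => Real.exp (μ p.1 * gg p.2 + ν p.1))
        (Set.Ioc 0 T ×ˢ Set.Ici 0) :=
      Real.continuous_exp.comp_continuousOn ((hcμ.mul hcg).add hcν)
    exact (((continuous_snd.add continuous_const).continuousOn).mul hcA).mul
      (((continuousOn_const.div (continuousOn_const.mul hcμ)
          (fun p hp => by simpa using hμne p hp)).add continuousOn_const).mul hcg |>.add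
        ((continuousOn_const.mul hcμ).add (continuousOn_const.mul
          (continuousOn_const.add (continuousOn_const.div hcμ hμne)))))
  · -- continuity of φx
    have hcμ : ContinuousOn (fun p : ℝ × ℝ => μ p.1) (Set.Ioc 0 T ×ˢ Set.Ici 0) :=
      hμc'.comp continuous_fst.continuousOn (fun p hp => hp.1)
    have hcν : ContinuousOn (fun p : ℝ × ℝ => ν p.1) (Set.Ioc 0 T ×ˢ Set.Ici 0) :=
      hνc'.comp continuous_fst.continuousOn (fun p hp => hp.1)
    have hcg : ContinuousOn (fun p : ℝ × ℝ => gg p.2) (Set.Ioc 0 T ×ˢ Set.Ici 0) :=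
      gg_contOn.comp continuous_snd.continuousOn (fun p hp => hp.2)
    have hgne : ∀ p ∈ Set.Ioc 0 T ×ˢ Set.Ici (0:ℝ), gg p.2 ≠ 0 :=
      fun p hp => (gg_pos hp.2).ne'
    exact (Real.continuous_exp.comp_continuousOn ((hcμ.mul hcg).add hcν)).mul
      (continuousOn_const.add (hcμ.div hcg hgne))
  · -- continuity of φxx
    have hcμ : ContinuousOn (fun p : ℝ × ℝ => μ p.1) (Set.Ioc 0 T ×ˢ Set.Ici 0) :=
      hμc'.comp continuous_fst.continuousOn (fun p hp => hp.1)
    have hcν : ContinuousOn (fun p : ℝ × ℝ => ν p.1) (Set.Ioc 0 T ×ˢ Set.Ici 0) :=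
      hνc'.comp continuous_fst.continuousOn (fun p hp => hp.1)
    have hcg : ContinuousOn (fun p : ℝ × ℝ => gg p.2) (Set.Ioc 0 T ×ˢ Set.Ici 0) :=
      gg_contOn.comp continuous_snd.continuousOn (fun p hp => hp.2)
    have hgne : ∀ p ∈ Set.Ioc 0 T ×ˢ Set.Ici (0:ℝ), gg p.2 ≠ 0 :=
      fun p hp => (gg_pos hp.2).ne'
    have hEgne : ∀ p ∈ Set.Ioc 0 T ×ˢ Set.Ici (0:ℝ), (p.2 + Real.exp 1) * gg p.2 ≠ 0 :=
      fun p hp => by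
        have := xe_pos hp.2; have := gg_pos hp.2; positivity
    exact ((Real.continuous_exp.comp_continuousOn ((hcμ.mul hcg).add hcν)).mul
      (hcμ.div (((continuous_snd.add continuous_const).continuousOn).mul hcg) hEgne)).mul
      ((continuousOn_const.add (hcμ.div hcg hgne)).sub
        (continuousOn_const.div (hcg.pow 2) (fun p hp => pow_ne_zero 2 (hgne p hp))))
  · -- the inequality
    intro s hs x hx z
    have hx' : (0:ℝ) ≤ x := hx
    have ha : 0 < μ s := hμpos s hs
    have hE := xe_pos hx'
    have hg := gg_pos hx'
    have hs2 : (0:ℝ) < Real.sqrt 2 := Real.sqrt_pos.2 (by norm_num)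
    have hX0 : 0 ≤ (if 1 < x then β * x * Real.sqrt (Real.log x) else 0) := by
      split
      · positivity
      · exact le_rfl
    have hXle : (if 1 < x then β * x * Real.sqrt (Real.log x) else 0)
        ≤ β * (x + Real.exp 1) * gg x / Real.sqrt 2 := by
      have hrhs : 0 ≤ β * (x + Real.exp 1) * gg x / Real.sqrt 2 := by positivity
      split
      · next h1 =>
        have hgsplit : gg x = Real.sqrt 2 * Real.sqrt (Real.log (x + Real.exp 1)) := by
          rw [gg, Real.sqrt_mul (by norm_num : (0:ℝ) ≤ 2)]
        have hlogle : Real.log x ≤ Real.log (x + Real.exp 1) :=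
          Real.log_le_log (by linarith) (by linarith [Real.exp_pos 1])
        have hsle : Real.sqrt (Real.log x) ≤ Real.sqrt (Real.log (x + Real.exp 1)) :=
          Real.sqrt_le_sqrt hlogle
        have hxle : x ≤ x + Real.exp 1 := by linarith [Real.exp_pos 1]
        have h2 : β * x * Real.sqrt (Real.log x)
            ≤ β * (x + Real.exp 1) * Real.sqrt (Real.log (x + Real.exp 1)) := by
          apply mul_le_mul (mul_le_mul_of_nonneg_left hxle hβ) hsle (Real.sqrt_nonneg _)
          positivity
        calc β * x * Real.sqrt (Real.log x)
            ≤ β * (x + Real.exp 1) * Real.sqrt (Real.log (x + Real.exp 1)) := h2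
        _ = β * (x + Real.exp 1) * gg x / Real.sqrt 2 := by
            rw [hgsplit]; field_simp
      · exact hrhs
    have key := key_ineq β γ (μ s) (gg x) (x + Real.exp 1) ‖z‖
      (if 1 < x then β * x * Real.sqrt (Real.log x) else 0)
      hβ hγ ha (gg_ge hx') hE (norm_nonneg z) hX0 hXle
    have heq : -(Real.exp (μ s * gg x + ν s) * (1 + μ s / gg x)) *
          ((if 1 < x then β * x * Real.sqrt (Real.log x) else 0) + γ * ‖z‖)
        + 1 / 2 * (Real.exp (μ s * gg x + ν s) * (μ s / ((x + Real.exp 1) * gg x)) *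
            (1 + μ s / gg x - 1 / gg x ^ 2)) * ‖z‖ ^ 2
        + (x + Real.exp 1) * Real.exp (μ s * gg x + ν s) *
            ((γ ^ 2 / (2 * μ s) + Real.sqrt 2 / 2 * β) * gg x
              + (Real.sqrt 2 / 2 * β * μ s + γ ^ 2 / 2 * (1 + Real.sqrt 2 / μ s)))
        = Real.exp (μ s * gg x + ν s) *
          (-(1 + μ s / gg x) * ((if 1 < x then β * x * Real.sqrt (Real.log x) else 0) + γ * ‖z‖)
            + 1 / 2 * ((μ s / ((x + Real.exp 1) * gg x)) * (1 + μ s / gg x - 1 / gg x ^ 2)) * ‖z‖ ^ 2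
            + (x + Real.exp 1) * ((γ ^ 2 / (2 * μ s) + Real.sqrt 2 / 2 * β) * gg x
              + (Real.sqrt 2 / 2 * β * μ s + γ ^ 2 / 2 * (1 + Real.sqrt 2 / μ s)))) := by
      ring
    calc (0:ℝ) ≤ Real.exp (μ s * gg x + ν s) *
          (-(1 + μ s / gg x) * ((if 1 < x then β * x * Real.sqrt (Real.log x) else 0) + γ * ‖z‖)
            + 1 / 2 * ((μ s / ((x + Real.exp 1) * gg x)) * (1 + μ s / gg x - 1 / gg x ^ 2)) * ‖z‖ ^ 2
            + (x + Real.exp 1) * ((γ ^ 2 / (2 * μ s) + Real.sqrt 2 / 2 * β) * gg x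
              + (Real.sqrt 2 / 2 * β * μ s + γ ^ 2 / 2 * (1 + Real.sqrt 2 / μ s)))) :=
        mul_nonneg (Real.exp_pos _).le key
    _ = _ := heq.symm
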